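/- Let Γ, α₀, α₁ ∈ [0,1] and let (A, X₁, X₂, S, Y, Z) be {0,1}-valued random variables with joint distribution specified by: P(A=1) = Γ; X₁ is uniform on {0,1} and independent of A; conditionally on (A, X₁), X₂ = X₁ with probability α_A and X₂ = 1 - X₁ with probability 1 - α_A; S is uniform on {0,1} and independent of (A, X₁, X₂); Y = X₁ if S = 0 and Y = X₂ if S = 1; and Z = X₁ if A = 1, Z = 0 if A = 0. Then I(Y; X₁, X₂) = α₁·Γ + α₀·(1 - Γ), where mutual information is computed in bits (logarithm base 2). -/
import Mathlib


open Finset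

/-- Probability that `X` takes the value `b`, under the pmf `p` on the finite sample
space `Ω`. -/
noncomputable def prob {Ω β : Type*} [Fintype Ω] (p : Ω → ℝ) (X : Ω → β) (b : β) : ℝ :=
  haveI := Classical.propDecidable
  ∑ ω, if X ω = b then p ω else 0

/-- Shannon entropy `H(X)` in bits (logarithm base 2). -/
noncomputable def ent2 {Ω β : Type*} [Fintype Ω] [Fintype β] (p : Ω → ℝ) (X : Ω → β) : ℝ :=
  -∑ b, prob p X b * Real.logb 2 (prob p X b)

/-- Conditional entropy `H(X|Y) = H(X,Y) - H(Y)` in bits. -/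
noncomputable def condEnt2 {Ω β γ : Type*} [Fintype Ω] [Fintype β] [Fintype γ]
    (p : Ω → ℝ) (X : Ω → β) (Y : Ω → γ) : ℝ :=
  ent2 p (fun ω => (X ω, Y ω)) - ent2 p Y

/-- Mutual information `I(X;Y) = H(X) + H(Y) - H(X,Y)` in bits. -/
noncomputable def mutInf2 {Ω β γ : Type*} [Fintype Ω] [Fintype β] [Fintype γ]
    (p : Ω → ℝ) (X : Ω → β) (Y : Ω → γ) : ℝ :=
  ent2 p X + ent2 p Y - ent2 p (fun ω => (X ω, Y ω))

/-- Conditional mutual information `I(X;Y|Z) = H(X|Z) + H(Y|Z) - H(X,Y|Z)` in bits. -/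
noncomputable def condMutInf2 {Ω β γ δ : Type*} [Fintype Ω] [Fintype β] [Fintype γ] [Fintype δ]
    (p : Ω → ℝ) (X : Ω → β) (Y : Ω → γ) (Z : Ω → δ) : ℝ :=
  condEnt2 p X Z + condEnt2 p Y Z - condEnt2 p (fun ω => (X ω, Y ω)) Z

/-- The joint pmf of `(A, X₁, X₂, S)` in the deterministic relay-with-actions example:
`P(A=1) = Γ`; `X₁` is uniform on `{0,1}` and independent of `A`; given `(A, X₁)`,
`X₂ = X₁` with probability `α_A` (`α₁` if `A = 1`, `α₀` if `A = 0`) and `X₂ = 1 - X₁`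
otherwise; `S` is uniform on `{0,1}` and independent of `(A, X₁, X₂)`.
A sample point is `ω = (a, x₁, x₂, s)` with `true` playing the role of `1`. -/
noncomputable def relayP (Γ α₀ α₁ : ℝ) : Bool × Bool × Bool × Bool → ℝ :=
  fun ω =>
    (if ω.1 then Γ else 1 - Γ) * (1 / 2) *
      (if ω.2.2.1 = ω.2.1 then (if ω.1 then α₁ else α₀) else 1 - (if ω.1 then α₁ else α₀)) *
      (1 / 2)

/-- The action `A`. -/
def act (ω : Bool × Bool × Bool × Bool) : Bool := ω.1

/-- The input `X₁` of Encoder 1. -/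
def inp1 (ω : Bool × Bool × Bool × Bool) : Bool := ω.2.1

/-- The input `X₂` of Encoder 2 (the relay). -/
def inp2 (ω : Bool × Bool × Bool × Bool) : Bool := ω.2.2.1

/-- The channel output `Y`: equal to `X₁` if the switch `S = 0` and to `X₂` if `S = 1`. -/
def outY (ω : Bool × Bool × Bool × Bool) : Bool := if ω.2.2.2 then ω.2.2.1 else ω.2.1

/-- The cribbed signal `Z`: equal to `X₁` if `A = 1` and constant (`0`) if `A = 0`. -/
def cribZ (ω : Bool × Bool × Bool × Bool) : Bool := if ω.1 then ω.2.1 else false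


lemma logb_half' : Real.logb 2 (1/2) = -1 := by
  rw [show (1/2:ℝ) = 2⁻¹ by norm_num, Real.logb_inv,
    Real.logb_self_eq_one (by norm_num)]

lemma logb_four' : Real.logb 2 4 = 2 := by
  rw [show (4:ℝ) = 2^(2:ℕ) by norm_num, Real.logb_pow,
    Real.logb_self_eq_one (by norm_num)]; norm_num

lemma relay_key (q : ℝ) :
    1 - (1-q) * Real.logb 2 ((1-q)/2) + (1-q) * Real.logb 2 ((1-q)/4) = q := by
  rcases eq_or_ne (1-q) 0 with h | h
  · rw [h]; linarith
  · rw [Real.logb_div h (by norm_num), Real.logb_div h (by norm_num), logb_four',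
      Real.logb_self_eq_one (by norm_num)]
    ring

set_option maxHeartbeats 2000000 in
/-- In the deterministic relay-with-actions example,
`I(Y; X₁, X₂) = α₁·Γ + α₀·(1 - Γ)` (in bits). -/
theorem relay_mutInf_output (Γ α₀ α₁ : ℝ)
    (hΓ : Γ ∈ Set.Icc (0 : ℝ) 1) (hα₀ : α₀ ∈ Set.Icc (0 : ℝ) 1)
    (hα₁ : α₁ ∈ Set.Icc (0 : ℝ) 1) :
    mutInf2 (relayP Γ α₀ α₁) outY (fun ω => (inp1 ω, inp2 ω))
      = α₁ * Γ + α₀ * (1 - Γ) := by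
  set q := α₁ * Γ + α₀ * (1 - Γ) with hq
  have pY : ∀ b, prob (relayP Γ α₀ α₁) outY b = 1/2 := by
    intro b
    cases b <;> · simp [prob, relayP, outY, Fintype.sum_prod_type, Fintype.sum_bool]; ring
  have pXs : ∀ x : Bool, prob (relayP Γ α₀ α₁) (fun ω => (inp1 ω, inp2 ω)) (x, x) = q/2 := by
    intro x
    cases x <;> · simp [prob, relayP, inp1, inp2, Fintype.sum_prod_type, Fintype.sum_bool, hq]; ring
  have pXd : ∀ x y : Bool, x ≠ y →
      prob (relayP Γ α₀ α₁) (fun ω => (inp1 ω, inp2 ω)) (x, y) = (1-q)/2 := by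
    intro x y hxy
    cases x <;> cases y <;> simp at hxy <;>
      · simp [prob, relayP, inp1, inp2, Fintype.sum_prod_type, Fintype.sum_bool, hq]; ring
  have pJs : ∀ x : Bool, prob (relayP Γ α₀ α₁)
      (fun ω => (outY ω, ((fun ω => (inp1 ω, inp2 ω)) ω))) (x, (x, x)) = q/2 := by
    intro x
    cases x <;> · simp [prob, relayP, outY, inp1, inp2, Fintype.sum_prod_type, Fintype.sum_bool, hq]; ring
  have pJ0 : ∀ x y : Bool, x ≠ y → prob (relayP Γ α₀ α₁)
      (fun ω => (outY ω, ((fun ω => (inp1 ω, inp2 ω)) ω))) (x, (y, y)) = 0 := by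
    intro x y hxy
    cases x <;> cases y <;> simp at hxy <;>
      simp [prob, relayP, outY, inp1, inp2, Fintype.sum_prod_type, Fintype.sum_bool]
  have pJd : ∀ y x z : Bool, x ≠ z → prob (relayP Γ α₀ α₁)
      (fun ω => (outY ω, ((fun ω => (inp1 ω, inp2 ω)) ω))) (y, (x, z)) = (1-q)/4 := by
    intro y x z hxz
    cases y <;> cases x <;> cases z <;> simp at hxz <;>
      · simp [prob, relayP, outY, inp1, inp2, Fintype.sum_prod_type, Fintype.sum_bool, hq]; ring
  simp only [mutInf2, ent2, Fintype.sum_prod_type, Fintype.sum_bool]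
  rw [pY true, pY false, pXs true, pXs false,
    pXd true false (by simp), pXd false true (by simp),
    pJs true, pJs false, pJ0 false true (by simp), pJ0 true false (by simp),
    pJd true true false (by simp), pJd true false true (by simp),
    pJd false true false (by simp), pJd false false true (by simp)]
  have h := relay_key q
  rw [logb_half', Real.logb_zero]
  linarith
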